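/- If a string v of length at least 2|u| occurs at two positions i < j in a string s with j - i ≤ |u| ≤ |v|/2, then all occurrences of v in s starting in the interval [i, i + |u|] form an arithmetic progression with common difference equal to the shortest period of v. -/

import Mathlib

/-- `p` is a period of the string (list) `w`. -/
def IsPeriod {α : Type*} (w : List α) (p : ℕ) : Prop :=
  1 ≤ p ∧ ∀ i, i + p < w.length → w[i]? = w[i + p]?

/-- `v` occurs in `s` at (0-indexed) position `i`. -/
def OccursAt {α : Type*} (v s : List α) (i : ℕ) : Prop :=
  (s.drop i).take v.length = v

lemma occursAt_get {α : Type*} {v s : List α} {i : ℕ} (h : OccursAt v s i)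
    {m : ℕ} (hm : m < v.length) : s[i + m]? = v[m]? := by
  conv_rhs => rw [← h]
  rw [List.getElem?_take_of_lt hm, List.getElem?_drop]

lemma occursAt_of_get {α : Type*} {v s : List α} {k : ℕ}
    (h : ∀ m, m < v.length → s[k + m]? = v[m]?) : OccursAt v s k := by
  apply List.ext_getElem?
  intro m
  by_cases hm : m < v.length
  · rw [List.getElem?_take_of_lt hm, List.getElem?_drop, h m hm]
  · rw [List.getElem?_eq_none_iff.2, List.getElem?_eq_none_iff.2 (by omega)]
    simp; omega

lemma period_iterate {α : Type*} {v : List α} {p : ℕ} (hp : IsPeriod v p) :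
    ∀ n m, m + n * p < v.length → v[m]? = v[m + n * p]? := by
  intro n
  induction n with
  | zero => simp
  | succ n ih =>
    intro m hm
    have hp1 := hp.1
    have e : m + (n + 1) * p = (m + n * p) + p := by ring
    rw [e] at hm ⊢
    have h2 := hp.2 (m + n * p) hm
    rw [← h2]
    exact ih m (by omega)

lemma period_dvd {α : Type*} {v : List α} {p : ℕ} (hp : IsPeriod v p)
    (hmin : ∀ q, IsPeriod v q → p ≤ q) :
    ∀ t, IsPeriod v t → p + t ≤ v.length → p ∣ t := by
  intro t
  induction t using Nat.strong_induction_on with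
  | _ t ih =>
    intro ht hle
    have hpt : p ≤ t := hmin t ht
    rcases eq_or_lt_of_le hpt with h | h
    · exact h ▸ dvd_refl p
    · have hp1 := hp.1
      have ht1 := ht.1
      have hper : IsPeriod v (t - p) := by
        refine ⟨by omega, ?_⟩
        intro m hm
        by_cases hc : m + t < v.length
        · have e1 := ht.2 m (by omega)
          have e2 := hp.2 (m + (t - p)) (by omega)
          have h2 : m + (t - p) + p = m + t := by omega
          rw [h2] at e2
          rw [e1, e2]
        · have e1 := hp.2 (m - p) (by omega)
          have e2 := ht.2 (m - p) (by omega)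
          have h1 : m - p + p = m := by omega
          have h2 : m - p + t = m + (t - p) := by omega
          rw [h1] at e1
          rw [h2] at e2
          rw [← e1, e2]
      have := ih (t - p) (by omega) hper (by omega)
      obtain ⟨c, hc⟩ := this
      exact ⟨c + 1, by rw [Nat.mul_succ]; omega⟩

/-- If `v` occurs in `s` at positions `i < j` with `j - i ≤ d` and `2d ≤ |v|`
(in the application `d = |u|` and `|v| ≥ 2|u|`), then the occurrences of `v` in `s`
starting in the interval `[i, i + d]` form an arithmetic progression whose common
difference is the shortest period `p` of `v`: every such occurrence is at a position
`i + α·p`, and every earlier term `i + α'·p` of the progression is also an occurrence. -/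
theorem occurrences_arithmetic_progression {α : Type*} (s v : List α) (i j d p : ℕ)
    (hij : i < j) (hd : j - i ≤ d) (hv : 2 * d ≤ v.length)
    (hoi : OccursAt v s i) (hoj : OccursAt v s j)
    (hp : IsPeriod v p) (hmin : ∀ q, IsPeriod v q → p ≤ q) :
    (∀ k, i ≤ k → k ≤ i + d → OccursAt v s k → ∃ a : ℕ, k = i + a * p) ∧
    (∀ k, i ≤ k → k ≤ i + d → OccursAt v s k →
      ∀ k', i ≤ k' → k' ≤ k → (∃ a : ℕ, k' = i + a * p) → OccursAt v s k') := by
  have hp1 := hp.1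
  have H1 : ∀ k, i ≤ k → k ≤ i + d → OccursAt v s k → ∃ a : ℕ, k = i + a * p := by
    intro k hik hkd hok
    rcases eq_or_lt_of_le hik with h | h
    · exact ⟨0, by omega⟩
    · set t := k - i with htdef
      have ht1 : 1 ≤ t := by omega
      have htd : t ≤ d := by omega
      have hper : IsPeriod v t := by
        refine ⟨ht1, ?_⟩
        intro m hm
        have e1 := occursAt_get hok (m := m) (by omega)
        have e2 := occursAt_get hoi (m := m + t) hm
        have h2 : i + (m + t) = k + m := by omega
        rw [h2] at e2
        rw [← e1, ← e2]
      have hpt : p ≤ t := hmin t hper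
      have hdvd := period_dvd hp hmin t hper (by omega)
      obtain ⟨a, ha⟩ := hdvd
      exact ⟨a, by rw [Nat.mul_comm a p]; omega⟩
  refine ⟨H1, ?_⟩
  intro k hik hkd hok k' hik' hk'k hex
  obtain ⟨a', ha'⟩ := hex
  obtain ⟨a, ha⟩ := H1 k hik hkd hok
  have hle : a' * p ≤ a * p := by omega
  have haa : a' ≤ a := Nat.le_of_mul_le_mul_right hle (by omega)
  have hsub : (a - a') * p + a' * p = a * p := by rw [Nat.sub_mul]; omega
  have hapd : a * p ≤ d := by omega
  apply occursAt_of_get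
  intro m hm
  by_cases hc : a' * p + m < v.length
  · have e1 := occursAt_get hoi (m := a' * p + m) hc
    have h2 : i + (a' * p + m) = k' + m := by omega
    rw [h2] at e1
    rw [e1]
    have := period_iterate hp a' m (by omega)
    have h3 : m + a' * p = a' * p + m := by omega
    rw [h3] at this
    exact this.symm
  · set m' := m - (a - a') * p with hm'def
    have hge : (a - a') * p ≤ m := by omega
    have e1 := occursAt_get hok (m := m') (by omega)
    have h2 : k + m' = k' + m := by omega
    rw [h2] at e1
    rw [e1]
    have := period_iterate hp (a - a') m' (by omega)
    have h3 : m' + (a - a') * p = m := by omega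
    rw [h3] at this
    exact this
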